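/- Let B be a finite simple graph. Call an unordered pair of distinct vertices {u,v} a 2-vertex-cut if B − u − v is disconnected, and for such a pair let m(u,v) denote the minimum number of vertices in a connected component of B − u − v. Suppose B has at least one 2-vertex-cut, that {u,v} is a 2-vertex-cut minimizing m(u,v) over all 2-vertex-cuts, that B₁ is a connected component of B − u − v with exactly m(u,v) vertices, and that u has exactly one neighbour in B₁. Then B₁ consists of a single vertex. -/

import Mathlib

/-- `{u, v}` is a 2-vertex-cut of `B`: `u ≠ v` and `B - u - v` is disconnected. -/
def IsTwoVertexCut {V : Type*} (B : SimpleGraph V) (u v : V) : Prop :=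
  u ≠ v ∧ ¬ (B.induce (({u, v} : Set V)ᶜ)).Preconnected

/-- `m(u,v)`: the minimum number of vertices of a connected component of `B - u - v`. -/
noncomputable def minCompCard {V : Type*} (B : SimpleGraph V) (u v : V) : ℕ :=
  sInf {n : ℕ | ∃ c : (B.induce (({u, v} : Set V)ᶜ)).ConnectedComponent, n = c.supp.ncard}

/-- In the complement of `{a, b}`, every vertex differs from `a` and `b`. -/
theorem mem_pair_compl {V : Type*} {a b : V} (z : (({a, b} : Set V)ᶜ : Set V)) :
    (z : V) ≠ a ∧ (z : V) ≠ b := by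
  have := z.2
  simp only [Set.mem_compl_iff, Set.mem_insert_iff, Set.mem_singleton_iff] at this
  push_neg at this
  exact this

/-- Suppose `{u,v}` is a 2-vertex-cut of the finite simple graph `B` minimizing the
order of the smallest component of `B - u - v`, that `B₁` is a connected component of
`B - u - v` with exactly `m(u,v)` vertices, and that `u` has exactly one neighbour in
`B₁`.  Then `B₁` consists of a single vertex. -/
theorem stmt_10 (V : Type*) [Fintype V] [DecidableEq V] (B : SimpleGraph V) (u v : V)
    (hcut : IsTwoVertexCut B u v)
    (hmin : ∀ u' v' : V, IsTwoVertexCut B u' v' → minCompCard B u v ≤ minCompCard B u' v')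
    (c₁ : (B.induce (({u, v} : Set V)ᶜ)).ConnectedComponent)
    (hc₁ : c₁.supp.ncard = minCompCard B u v)
    (hone : ({x : (({u, v} : Set V)ᶜ : Set V) | x ∈ c₁.supp ∧ B.Adj u ↑x}).ncard = 1) :
    c₁.supp.ncard = 1 := by
  classical
  by_contra hne
  -- the unique neighbour w of u in c₁
  obtain ⟨w, hw⟩ := Set.ncard_eq_one.mp hone
  have hwN : w ∈ {x : (({u, v} : Set V)ᶜ : Set V) | x ∈ c₁.supp ∧ B.Adj u ↑x} := by
    rw [hw]; exact rfl
  obtain ⟨hwc, hwadj⟩ := hwN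
  have hwuv := mem_pair_compl w
  -- c₁ has at least 2 vertices
  have hpos : 0 < c₁.supp.ncard := (Set.ncard_pos (Set.toFinite _)).mpr ⟨w, hwc⟩
  have h2 : 2 ≤ c₁.supp.ncard := by omega
  obtain ⟨x, hxc, hxw⟩ := Set.exists_ne_of_one_lt_ncard (s := c₁.supp) (by omega) w
  have hxuv := mem_pair_compl x
  -- a vertex outside c₁
  have hy : ∃ y : (({u, v} : Set V)ᶜ : Set V), y ∉ c₁.supp := by
    by_contra hy
    push_neg at hy
    obtain ⟨a, b, hab⟩ := by
      have := hcut.2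
      unfold SimpleGraph.Preconnected at this
      push_neg at this
      exact this
    have ha := (SimpleGraph.ConnectedComponent.mem_supp_iff _ _).mp (hy a)
    have hb := (SimpleGraph.ConnectedComponent.mem_supp_iff _ _).mp (hy b)
    exact hab (SimpleGraph.ConnectedComponent.exact (ha.trans hb.symm))
  obtain ⟨y, hyc⟩ := hy
  have hyuv := mem_pair_compl y
  -- the set S = c₁ \ {w} as a subset of V
  set S : Set V := {z : V | ∃ hz : z ∈ (({u, v} : Set V)ᶜ : Set V),
    (⟨z, hz⟩ : (({u, v} : Set V)ᶜ : Set V)) ∈ c₁.supp ∧ z ≠ (w : V)} with hS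
  -- closure of S under adjacency avoiding w and v
  have hclose : ∀ z z' : V, z ∈ S → B.Adj z z' → z' ≠ (w : V) → z' ≠ v → z' ∈ S := by
    intro z z' hzS hadj hz'w hz'v
    obtain ⟨hzT, hzc, hzw⟩ := hzS
    have hz'u : z' ≠ u := by
      intro h
      have hadj2 : B.Adj u z := by rw [← h]; exact hadj.symm
      have hmem : (⟨z, hzT⟩ : (({u, v} : Set V)ᶜ : Set V)) ∈
          {x : (({u, v} : Set V)ᶜ : Set V) | x ∈ c₁.supp ∧ B.Adj u ↑x} := ⟨hzc, hadj2⟩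
      rw [hw] at hmem
      exact hzw (congrArg Subtype.val hmem)
    have hz'T : z' ∈ (({u, v} : Set V)ᶜ : Set V) := by simp [hz'u, hz'v]
    refine ⟨hz'T, ?_, hz'w⟩
    have hadj' : (B.induce (({u, v} : Set V)ᶜ)).Adj ⟨z, hzT⟩ ⟨z', hz'T⟩ := by
      simpa using hadj
    rw [SimpleGraph.ConnectedComponent.mem_supp_iff] at hzc ⊢
    rw [← hzc]
    exact SimpleGraph.ConnectedComponent.sound hadj'.symm.reachable
  -- walks in B - w - v starting in S stay in S
  have hwalk : ∀ a b : (({(w : V), v} : Set V)ᶜ : Set V),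
      (B.induce (({(w : V), v} : Set V)ᶜ)).Walk a b → (a : V) ∈ S → (b : V) ∈ S := by
    intro a b p
    induction p with
    | nil => exact id
    | @cons a c b h p ih =>
      intro haS
      have hc := mem_pair_compl c
      exact ih (hclose _ _ haS (by simpa using h) hc.1 hc.2)
  have hxT' : (x : V) ∈ (({(w : V), v} : Set V)ᶜ : Set V) := by
    simp only [Set.mem_compl_iff, Set.mem_insert_iff, Set.mem_singleton_iff]
    push_neg
    exact ⟨fun h => hxw (Subtype.ext h), hxuv.2⟩
  have hyT' : (y : V) ∈ (({(w : V), v} : Set V)ᶜ : Set V) := by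
    simp only [Set.mem_compl_iff, Set.mem_insert_iff, Set.mem_singleton_iff]
    push_neg
    exact ⟨fun h => hyc (by rwa [show y = w from Subtype.ext h]), hyuv.2⟩
  have hxS : (x : V) ∈ S := ⟨x.2, by simpa using hxc, fun h => hxw (Subtype.ext h)⟩
  have hyS : (y : V) ∉ S := by
    rintro ⟨hyT, hyc', -⟩
    exact hyc (by simpa using hyc')
  -- {w, v} is a 2-vertex-cut
  have hcut' : IsTwoVertexCut B (w : V) v := by
    refine ⟨hwuv.2, fun hpre => ?_⟩
    obtain ⟨p⟩ := hpre ⟨x, hxT'⟩ ⟨y, hyT'⟩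
    exact hyS (hwalk _ _ p hxS)
  -- the component of x in B - w - v is contained in S
  set c' := (B.induce (({(w : V), v} : Set V)ᶜ)).connectedComponentMk ⟨x, hxT'⟩ with hc'
  have hsub : c'.supp ⊆ {a : (({(w : V), v} : Set V)ᶜ : Set V) | (a : V) ∈ S} := by
    intro a ha
    rw [SimpleGraph.ConnectedComponent.mem_supp_iff] at ha
    obtain ⟨p⟩ := SimpleGraph.ConnectedComponent.exact (ha.symm.trans rfl :
      (B.induce (({(w : V), v} : Set V)ᶜ)).connectedComponentMk ⟨x, hxT'⟩ =
      (B.induce (({(w : V), v} : Set V)ᶜ)).connectedComponentMk a)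
    exact hwalk _ _ p hxS
  -- cardinality bounds
  have hb1 : c'.supp.ncard ≤ S.ncard := by
    calc c'.supp.ncard ≤ {a : (({(w : V), v} : Set V)ᶜ : Set V) | (a : V) ∈ S}.ncard :=
          Set.ncard_le_ncard hsub (Set.toFinite _)
      _ = (Subtype.val '' {a : (({(w : V), v} : Set V)ᶜ : Set V) | (a : V) ∈ S}).ncard :=
          (Set.ncard_image_of_injective _ Subtype.val_injective).symm
      _ ≤ S.ncard := Set.ncard_le_ncard (by rintro z ⟨a, ha, rfl⟩; exact ha)
          (Set.toFinite _)
  have hb2 : S.ncard ≤ c₁.supp.ncard - 1 := by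
    have hSsub : S ⊆ (Subtype.val '' c₁.supp) \ {(w : V)} := by
      rintro z ⟨hzT, hzc, hzw⟩
      exact ⟨⟨⟨z, hzT⟩, hzc, rfl⟩, hzw⟩
    have hwmem : (w : V) ∈ Subtype.val '' c₁.supp := ⟨w, hwc, rfl⟩
    calc S.ncard ≤ ((Subtype.val '' c₁.supp) \ {(w : V)}).ncard :=
          Set.ncard_le_ncard hSsub (Set.toFinite _)
      _ = (Subtype.val '' c₁.supp).ncard - 1 :=
          Set.ncard_diff_singleton_of_mem hwmem
      _ = c₁.supp.ncard - 1 := by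
          rw [Set.ncard_image_of_injective _ Subtype.val_injective]
  have hle : minCompCard B (w : V) v ≤ c'.supp.ncard :=
    Nat.sInf_le ⟨c', rfl⟩
  have hmm := hmin _ _ hcut'
  omega
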